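/- Let p be an odd prime, m ≥ 2, q = p^m, 1 ≤ s < m, and suppose v_2(s) > v_2(m). Let x and y be two distinct (q+1)-th roots of unity in GF(q^2), both different from 1, such that neither x nor y is a (p^{gcd(s,m)}+1)-th root of unity. Then the determinant of the 3×3 matrix with rows (1,1,1), (1,x,y), (1,x^{p^s},y^{p^s}) is nonzero. -/

import Mathlib

lemma aux_odd_quot (a : ℕ) (ha : Odd a) (h1 : 1 ≤ a) (k : ℕ) :
    ∃ S : ℕ, Odd S ∧ a ^ (2 * k + 1) + 1 = (a + 1) * S := by
  induction k with
  | zero => exact ⟨1, odd_one, by ring⟩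
  | succ n ih =>
    obtain ⟨S, hS, hEq⟩ := ih
    have hS1 : 1 ≤ S := hS.pos
    have haa : a ≤ a ^ 2 := by nlinarith
    have hle : a - 1 ≤ a ^ 2 * S := le_trans (by omega) (Nat.le_mul_of_pos_right _ hS1)
    refine ⟨a ^ 2 * S - (a - 1), ?_, ?_⟩
    · obtain ⟨t, ht⟩ := (ha.pow (n := 2)).mul hS
      obtain ⟨i, hi⟩ := ha
      rw [Nat.odd_iff]
      omega
    · have hEq' : (a : ℤ) ^ (2 * n + 1) + 1 = (a + 1) * S := by exact_mod_cast hEq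
      zify [hle, h1]
      linear_combination (a : ℤ) ^ 2 * hEq'

lemma aux_gcd_pow_sub_one (a s t : ℕ) (ha : 1 ≤ a) (hs : 1 ≤ s) :
    Nat.gcd (a ^ s - 1) (a ^ t - 1) ∣ a ^ Nat.gcd s t - 1 := by
  set g := Nat.gcd (a ^ s - 1) (a ^ t - 1) with hg
  have key : ∀ n : ℕ, g ∣ a ^ n - 1 → ((a : ZMod g)) ^ n = 1 := by
    intro n hn
    have h := (ZMod.natCast_eq_zero_iff _ g).mpr hn
    have hps : 1 ≤ a ^ n := Nat.one_le_pow _ _ ha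
    rw [Nat.cast_sub hps, Nat.cast_pow, Nat.cast_one, sub_eq_zero] at h
    exact h.symm ▸ rfl
  have h1 : ((a : ZMod g)) ^ s = 1 := key s (Nat.gcd_dvd_left _ _)
  have h2 : ((a : ZMod g)) ^ t = 1 := key t (Nat.gcd_dvd_right _ _)
  have hu : IsUnit (a : ZMod g) := by
    refine IsUnit.of_mul_eq_one ((a : ZMod g) ^ (s - 1)) ?_
    rw [← pow_succ', Nat.sub_add_cancel hs]
    exact h1
  have hus : hu.unit ^ s = 1 := Units.ext (by simpa using h1)
  have hut : hu.unit ^ t = 1 := Units.ext (by simpa using h2)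
  have := pow_gcd_eq_one.mpr ⟨hus, hut⟩
  have hval : ((a : ZMod g)) ^ Nat.gcd s t = 1 := by
    have := congrArg Units.val this
    simpa using this
  have hps : 1 ≤ a ^ Nat.gcd s t := Nat.one_le_pow _ _ ha
  rw [← ZMod.natCast_eq_zero_iff]
  rw [Nat.cast_sub hps, Nat.cast_pow, Nat.cast_one, sub_eq_zero]
  exact hval

lemma aux_gcd_dvd (p s m : ℕ) (hp : p.Prime) (hodd : Odd p)
    (hs : 1 ≤ s) (hm : 1 ≤ m) (hk : Odd (m / Nat.gcd s m)) :
    Nat.gcd (p ^ s - 1) (p ^ m + 1) ∣ p ^ Nat.gcd s m + 1 := by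
  set d := Nat.gcd s m with hd
  set g := Nat.gcd (p ^ s - 1) (p ^ m + 1) with hgdef
  have hp2 : 2 ≤ p := hp.two_le
  have hd1 : 1 ≤ d := Nat.gcd_pos_of_pos_left _ hs
  have hdm : d ∣ m := Nat.gcd_dvd_right s m
  have hpm1 : 1 ≤ p ^ m := Nat.one_le_pow _ _ (by omega)
  have hpd1 : 1 ≤ p ^ d := Nat.one_le_pow _ _ (by omega)
  -- p^m + 1 ∣ p^(2m) - 1
  have hfac2m : p ^ (2 * m) - 1 = (p ^ m + 1) * (p ^ m - 1) := by
    have h2m1 : 1 ≤ p ^ (2 * m) := Nat.one_le_pow _ _ (by omega)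
    zify [hpm1, h2m1]
    ring
  have hg2m : g ∣ p ^ (2 * m) - 1 := by
    refine (Nat.gcd_dvd_right _ _).trans ⟨p ^ m - 1, hfac2m⟩
  -- g ∣ p^(gcd s (2m)) - 1 ∣ p^(2d) - 1
  have hggcd : g ∣ p ^ Nat.gcd s (2 * m) - 1 :=
    (Nat.dvd_gcd (Nat.gcd_dvd_left _ _) hg2m).trans
      (aux_gcd_pow_sub_one p s (2 * m) (by omega) hs)
  have hgcd2d : Nat.gcd s (2 * m) ∣ 2 * d := by
    have h1 : Nat.gcd s (2 * m) ∣ Nat.gcd (2 * s) (2 * m) :=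
      Nat.dvd_gcd ((Nat.gcd_dvd_left s (2 * m)).trans (dvd_mul_left s 2))
        (Nat.gcd_dvd_right _ _)
    rwa [Nat.gcd_mul_left] at h1
  have hdvdpow : ∀ u v : ℕ, u ∣ v → p ^ u - 1 ∣ p ^ v - 1 := by
    intro u v ⟨c, hc⟩
    subst hc
    rw [pow_mul]
    simpa using Nat.sub_dvd_pow_sub_pow (p ^ u) 1 c
  have hg2d : g ∣ p ^ (2 * d) - 1 := hggcd.trans (hdvdpow _ _ hgcd2d)
  have hfac : p ^ (2 * d) - 1 = (p ^ d - 1) * (p ^ d + 1) := by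
    have h2d1 : 1 ≤ p ^ (2 * d) := Nat.one_le_pow _ _ (by omega)
    zify [hpd1, h2d1]
    ring
  rw [hfac] at hg2d
  -- gcd g (p^d - 1) ∣ 2
  have hgd2 : Nat.gcd g (p ^ d - 1) ∣ 2 := by
    have h1 : Nat.gcd g (p ^ d - 1) ∣ p ^ m + 1 :=
      (Nat.gcd_dvd_left _ _).trans (Nat.gcd_dvd_right _ _)
    have h2 : Nat.gcd g (p ^ d - 1) ∣ p ^ m - 1 :=
      (Nat.gcd_dvd_right _ _).trans (hdvdpow _ _ hdm)
    have := Nat.dvd_sub h1 h2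
    have heq : p ^ m + 1 - (p ^ m - 1) = 2 := by omega
    rwa [heq] at this
  have hg2pd : g ∣ 2 * (p ^ d + 1) := by
    have h1 : g ∣ Nat.gcd g (p ^ d - 1) * Nat.gcd g (p ^ d + 1) := by
      have : Nat.gcd g ((p ^ d - 1) * (p ^ d + 1)) ∣ Nat.gcd g (p ^ d - 1) * Nat.gcd g (p ^ d + 1) := gcd_mul_dvd_mul_gcd g (p ^ d - 1) (p ^ d + 1)
      rwa [Nat.gcd_eq_left hg2d] at this
    exact h1.trans (mul_dvd_mul hgd2 (Nat.gcd_dvd_right _ _))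
  -- p^m + 1 = (p^d + 1) * S with S odd
  obtain ⟨k, hk2⟩ := hk
  obtain ⟨S, hSodd, hSeq⟩ := aux_odd_quot (p ^ d) (hodd.pow) hpd1 k
  have hpmS : p ^ m + 1 = (p ^ d + 1) * S := by
    rw [← hSeq, ← hk2, ← pow_mul, Nat.mul_div_cancel' hdm]
  -- conclude
  have hfin : g ∣ (p ^ d + 1) * Nat.gcd 2 S := by
    have h1 : g ∣ Nat.gcd ((p ^ d + 1) * 2) ((p ^ d + 1) * S) := by
      refine Nat.dvd_gcd ?_ ?_
      · rwa [mul_comm]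
      · rw [← hpmS]; exact Nat.gcd_dvd_right _ _
    rwa [Nat.gcd_mul_left] at h1
  rwa [Nat.coprime_two_left.mpr hSodd, mul_one] at hfin

theorem stmt7 (p m s q : ℕ) (hp : p.Prime) (hpodd : Odd p) (hm : 2 ≤ m)
    (hq : q = p ^ m) (hs1 : 1 ≤ s) (hs2 : s < m)
    (hv2 : padicValNat 2 m < padicValNat 2 s)
    (F : Type*) [Field F] [Fintype F] (hF : Fintype.card F = q ^ 2)
    (x y : F) (hx : x ^ (q + 1) = 1) (hy : y ^ (q + 1) = 1)
    (hxy : x ≠ y) (hx1 : x ≠ 1) (hy1 : y ≠ 1)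
    (hxU : x ^ (p ^ (Nat.gcd s m) + 1) ≠ 1) (hyU : y ^ (p ^ (Nat.gcd s m) + 1) ≠ 1) :
    Matrix.det !![1, 1, 1; 1, x, y; 1, x ^ (p ^ s), y ^ (p ^ s)] ≠ 0 := by
  intro hdet
  subst hq
  haveI : Fact p.Prime := ⟨hp⟩
  have hp2 : 2 ≤ p := hp.two_le
  set d := Nat.gcd s m with hd
  -- characteristic
  haveI hchar : CharP F p := by
    have hrc : CharP F (ringChar F) := ringChar.charP F
    have hrp : (ringChar F).Prime := CharP.char_is_prime F (ringChar F)
    haveI : Fact (ringChar F).Prime := ⟨hrp⟩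
    obtain ⟨n, hn, hcard⟩ := FiniteField.card F (ringChar F)
    have hcard2 : (ringChar F) ^ (n : ℕ) = p ^ (m * 2) := by
      rw [← hcard, hF, ← pow_mul]
    have hrdvd : ringChar F ∣ p := by
      refine hrp.dvd_of_dvd_pow (n := m * 2) ?_
      rw [← hcard2]
      exact dvd_pow_self _ (by positivity)
    have : ringChar F = p := (Nat.prime_dvd_prime_iff_eq hrp hp).mp hrdvd
    rwa [this] at hrc
  -- basic nonzero facts
  have hq1 : p ^ m + 1 ≠ 0 := by positivity
  have hx0 : x ≠ 0 := by
    intro h; rw [h, zero_pow (by omega)] at hx; exact one_ne_zero hx.symm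
  have hy0 : y ≠ 0 := by
    intro h; rw [h, zero_pow (by omega)] at hy; exact one_ne_zero hy.symm
  -- p^s-th power being 1 forces element = 1
  have pow1 : ∀ z : F, z ^ (p ^ m + 1) = 1 → z ^ p ^ s = 1 → z = 1 := by
    intro z h1 h2
    have hnd : ¬ p ∣ p ^ m + 1 := by
      intro h
      have h' : p ∣ p ^ m := dvd_pow_self p (by omega)
      have := Nat.dvd_sub h h'
      simp at this
      omega
    have hcop : Nat.Coprime (p ^ s) (p ^ m + 1) :=
      Nat.Coprime.pow_left _ (hp.coprime_iff_not_dvd.mpr hnd)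
    have := pow_gcd_eq_one.mpr ⟨h2, h1⟩
    rwa [hcop, pow_one] at this
  set X := x ^ p ^ s with hX
  set Y := y ^ p ^ s with hY
  have hX0 : X ≠ 0 := pow_ne_zero _ hx0
  have hY0 : Y ≠ 0 := pow_ne_zero _ hy0
  have hX1 : X ≠ 1 := fun h => hx1 (pow1 x hx h)
  have hY1 : Y ≠ 1 := fun h => hy1 (pow1 y hy h)
  -- determinant equation
  simp [Matrix.det_fin_three, Matrix.vecHead, Matrix.vecTail] at hdet
  have E : (x - 1) * (Y - 1) = (y - 1) * (X - 1) := by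
    linear_combination hdet
  -- Frobenius: raise E to the q-th power
  have hinv : ∀ z : F, z ^ (p ^ m + 1) = 1 → z ^ p ^ m = z⁻¹ := by
    intro z h1
    refine eq_inv_of_mul_eq_one_left ?_
    rw [← pow_succ]
    exact h1
  have hxq : x ^ p ^ m = x⁻¹ := hinv x hx
  have hyq : y ^ p ^ m = y⁻¹ := hinv y hy
  have hXq : X ^ p ^ m = X⁻¹ := by
    rw [hX, ← pow_mul, mul_comm, pow_mul, hxq, inv_pow]
  have hYq : Y ^ p ^ m = Y⁻¹ := by
    rw [hY, ← pow_mul, mul_comm, pow_mul, hyq, inv_pow]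
  have E2 := congrArg (fun z => z ^ p ^ m) E
  simp only [mul_pow, sub_pow_char_pow, one_pow, hxq, hyq, hXq, hYq] at E2
  -- clear denominators
  have key : (x - 1) * (Y - 1) * (y * X) = (y - 1) * (X - 1) * (x * Y) := by
    field_simp at E2
    linear_combination E2
  rw [E] at key
  have hyX1 : (y - 1) * (X - 1) ≠ 0 :=
    mul_ne_zero (sub_ne_zero.mpr hy1) (sub_ne_zero.mpr hX1)
  have key2 : y * X = x * Y := mul_left_cancel₀ hyX1 key
  have hsum : x + Y = y + X := by linear_combination -E - key2
  have h6 : (x - y) * (x - X) = 0 := by linear_combination x * hsum + key2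
  have hxX : x = X := by
    rcases mul_eq_zero.mp h6 with h | h
    · exact absurd (sub_eq_zero.mp h) hxy
    · exact sub_eq_zero.mp h
  -- x^(p^s - 1) = 1
  have hps1 : 1 ≤ p ^ s := Nat.one_le_pow _ _ (by omega)
  have hxps : x ^ (p ^ s - 1) = 1 := by
    have h1 : x * x ^ (p ^ s - 1) = x * 1 := by
      rw [mul_one, ← pow_succ', Nat.sub_add_cancel hps1]
      exact hxX.symm
    exact mul_left_cancel₀ hx0 h1
  -- Odd (m / d)
  have hm0 : m ≠ 0 := by omega
  have hd1 : 1 ≤ d := Nat.gcd_pos_of_pos_left _ hs1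
  have hdm : d ∣ m := Nat.gcd_dvd_right s m
  have hk0 : m / d ≠ 0 := by
    have := Nat.le_of_dvd (by omega) hdm
    have := Nat.div_pos this (by omega)
    omega
  haveI : Fact (Nat.Prime 2) := ⟨Nat.prime_two⟩
  have hoddk : Odd (m / d) := by
    have hA : (2 : ℕ) ^ padicValNat 2 m ∣ s :=
      dvd_trans (pow_dvd_pow 2 hv2.le) pow_padicValNat_dvd
    have h2d : (2 : ℕ) ^ padicValNat 2 m ∣ d := Nat.dvd_gcd hA pow_padicValNat_dvd
    have hvd : padicValNat 2 m ≤ padicValNat 2 d := by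
      have := (Nat.Prime.pow_dvd_iff_le_factorization Nat.prime_two (by omega)).mp h2d
      rwa [Nat.factorization_def _ Nat.prime_two] at this
    have hmul : padicValNat 2 m = padicValNat 2 d + padicValNat 2 (m / d) := by
      conv_lhs => rw [← Nat.mul_div_cancel' hdm]
      exact padicValNat.mul (by omega) hk0
    rw [Nat.odd_iff]
    by_contra h
    have h2 : 2 ∣ m / d := by omega
    have hv1 : 1 ≤ padicValNat 2 (m / d) := by
      have := (Nat.Prime.pow_dvd_iff_le_factorization Nat.prime_two hk0).mp
        (pow_one 2 ▸ h2)
      rwa [Nat.factorization_def _ Nat.prime_two] at this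
    omega
  -- conclude
  obtain ⟨c, hc⟩ := aux_gcd_dvd p s m hp hpodd hs1 (by omega) hoddk
  have hxg : x ^ Nat.gcd (p ^ s - 1) (p ^ m + 1) = 1 := pow_gcd_eq_one.mpr ⟨hxps, hx⟩
  have : x ^ (p ^ d + 1) = 1 := by
    rw [hc, pow_mul, hxg, one_pow]
  exact hxU this
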